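/- For any parameter sequence (N_k), for every k ≥ 1, setting β = 2^{3ℓ_k}, every equilibrium state μ for βφ_X satisfies μ(Y_k) > 1 − 2^{−ℓ_k}, where Y_k = {x ∈ {0,1}^ℕ : x|_{[i, i+ℓ_k−1]} ∈ L_k for some i ∈ {0,…,ℓ_k−1}}. -/

import Mathlib

open MeasureTheory Filter Topology
open scoped ENNReal Classical

noncomputable section

/-- The configuration space `{0,1}^ℕ` (with `false = 0`, `true = 1`). -/
abbrev Conf : Type := ℕ → Bool

/-- The shift map `(Tx)(n) = x(n+1)`. -/
def shiftMap (x : Conf) : Conf := fun n => x (n + 1)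

/-- The metric `d(x,y) = 2^{-min{n : x n ≠ y n}}` for `x ≠ y`, and `d(x,x) = 0`. -/
def dist01 (x y : Conf) : ℝ :=
  if x = y then 0 else ((2 : ℝ) ^ sInf {n : ℕ | x n ≠ y n})⁻¹

/-- A subshift: a nonempty, closed, shift-invariant subset of `{0,1}^ℕ`. -/
def IsSubshift (X : Set Conf) : Prop :=
  X.Nonempty ∧ IsClosed X ∧ ∀ x ∈ X, shiftMap x ∈ X

/-- The potential `φ_X(y) = -d(y, X) = -inf {d(y,x) : x ∈ X}`. -/
def phiX (X : Set Conf) (y : Conf) : ℝ := -sInf (dist01 y '' X)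

/-- The cylinder set of points whose first `n` symbols form the word `w`. -/
def cylinder {n : ℕ} (w : Fin n → Bool) : Set Conf := {x | ∀ i : Fin n, x i = w i}

/-- The entropy `H_n(μ)` of the `n`-block marginal of `μ` (base-2 logarithm). -/
def Hblock (μ : Measure Conf) (n : ℕ) : ℝ :=
  -∑ w : Fin n → Bool, (μ (cylinder w)).toReal * Real.logb 2 (μ (cylinder w)).toReal

/-- The Kolmogorov–Sinai entropy `h(μ) = lim_n H_n(μ)/n`; since the limit exists
(by subadditivity) for shift-invariant measures, we may define it as a `limsup`. -/
def entropy (μ : Measure Conf) : ℝ :=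
  limsup (fun n : ℕ => Hblock μ n / n) atTop

/-- A shift-invariant Borel probability measure. -/
def IsInvProb (μ : Measure Conf) : Prop :=
  IsProbabilityMeasure μ ∧ μ.map shiftMap = μ

/-- An equilibrium state for `βφ`: a shift-invariant Borel probability measure maximizing
`ν ↦ β∫φ dν + h(ν)` over all shift-invariant Borel probability measures. -/
def IsEquilibriumState (φ : Conf → ℝ) (β : ℝ) (μ : Measure Conf) : Prop :=
  IsInvProb μ ∧ ∀ ν : Measure Conf, IsInvProb ν →
    β * ∫ x, φ x ∂ν + entropy ν ≤ β * ∫ x, φ x ∂μ + entropy μ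

/-- The set of all concatenations of `m` words from `S`. -/
def tupleConcat (S : Finset (List Bool)) : ℕ → Finset (List Bool)
  | 0 => {([] : List Bool)}
  | m + 1 => (S ×ˢ tupleConcat S m).image fun p => p.1 ++ p.2

/-- `A_0 = {00000, 01000}` (with `false = 0`, `true = 1`). -/
def Azero : Finset (List Bool) :=
  {[false, false, false, false, false], [false, true, false, false, false]}

/-- `B_0 = {11111, 10111}`. -/
def Bzero : Finset (List Bool) :=
  {[true, true, true, true, true], [true, false, true, true, true]}

/-- The inductive construction: `consAB N k = (ℓ_k, A_k, B_k)`.  At step `k ≥ 1`,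
`c_k` is the concatenation, in lexicographic order, of all words in
`(A_{k-1} ∪ B_{k-1})^{2^{ℓ_{k-1}}+1}`; if `k` is odd, `A_k = {c_k a^{N_k} : a ∈ A_{k-1}}`
and `B_k = {c_k b_1 ⋯ b_{N_k} : b_i ∈ B_{k-1}}`, and symmetrically if `k` is even. -/
def consAB (N : ℕ → ℕ) : ℕ → ℕ × Finset (List Bool) × Finset (List Bool)
  | 0 => (5, Azero, Bzero)
  | k + 1 =>
    let ℓ := (consAB N k).1
    let A := (consAB N k).2.1
    let B := (consAB N k).2.2
    let c : List Bool := ((tupleConcat (A ∪ B) (2 ^ ℓ + 1)).sort (· ≤ ·)).flatten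
    let n := N (k + 1)
    if k % 2 = 0 then -- `k + 1` is odd
      (c.length + n * ℓ,
        A.image fun a => c ++ (List.replicate n a).flatten,
        (tupleConcat B n).image fun w => c ++ w)
    else -- `k + 1` is even
      (c.length + n * ℓ,
        (tupleConcat A n).image fun w => c ++ w,
        B.image fun b => c ++ (List.replicate n b).flatten)

/-- The common length `ℓ_k` of the words of `A_k ∪ B_k`. -/
def ell (N : ℕ → ℕ) (k : ℕ) : ℕ := (consAB N k).1

/-- The set of words `A_k`. -/
def Ak (N : ℕ → ℕ) (k : ℕ) : Finset (List Bool) := (consAB N k).2.1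

/-- The set of words `B_k`. -/
def Bk (N : ℕ → ℕ) (k : ℕ) : Finset (List Bool) := (consAB N k).2.2

/-- `L_k = A_k ∪ B_k`. -/
def Lk (N : ℕ → ℕ) (k : ℕ) : Finset (List Bool) := Ak N k ∪ Bk N k

/-- The frequency `f_0(u)` of the symbol `0` in the word `u`. -/
def freq0 (u : List Bool) : ℝ := (u.count false : ℝ) / u.length

/-- `z` is an infinite concatenation of words from `L`. -/
def IsConcat (L : Finset (List Bool)) (z : Conf) : Prop :=
  ∃ w : ℕ → List Bool, (∀ i, w i ∈ L ∧ w i ≠ []) ∧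
    ∀ (i j : ℕ) (h : j < (w i).length),
      z ((∑ r ∈ Finset.range i, (w r).length) + j) = (w i).get ⟨j, h⟩

/-- `⟨L⟩`: the subshift of all shifts of infinite concatenations of words from `L`. -/
def langShift (L : Finset (List Bool)) : Set Conf :=
  {y | ∃ (n : ℕ) (z : Conf), IsConcat L z ∧ y = fun m => z (m + n)}

/-- The subshift `X = ⋂_{k ≥ 1} ⟨L_k⟩`. -/
def Xsub (N : ℕ → ℕ) : Set Conf := ⋂ k : ℕ, langShift (Lk N (k + 1))

/-- The word `x|_{[i, i+ℓ)}` read off from `x ∈ {0,1}^ℕ`. -/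
def windowWord (x : Conf) (i ℓ : ℕ) : List Bool := List.ofFn fun j : Fin ℓ => x (i + j)

/-- The set `Y_k` of points containing a word of `L_k` starting at some
position `i ∈ {0, …, ℓ_k - 1}`. -/
def Yset (N : ℕ → ℕ) (k : ℕ) : Set Conf :=
  {x | ∃ i < ell N k, windowWord x i (ell N k) ∈ Lk N k}

lemma dist01_nonneg (x y : Conf) : 0 ≤ dist01 x y := by
  unfold dist01; split
  · exact le_rfl
  · positivity

lemma dist01_comm (x y : Conf) : dist01 x y = dist01 y x := by
  unfold dist01
  by_cases h : x = y
  · simp [h]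
  · rw [if_neg h, if_neg (Ne.symm h)]
    congr 3
    exact Set.ext fun n => ne_comm

lemma dist01_le_pow {x y : Conf} {m : ℕ} (h : ∀ j < m, x j = y j) :
    dist01 x y ≤ (1/2 : ℝ) ^ m := by
  unfold dist01; split
  · positivity
  · rename_i hne
    have hS : {n : ℕ | x n ≠ y n}.Nonempty := Function.ne_iff.mp hne
    have hmem : sInf {n : ℕ | x n ≠ y n} ∈ {n : ℕ | x n ≠ y n} := Nat.sInf_mem hS
    have hge : m ≤ sInf {n : ℕ | x n ≠ y n} := by
      by_contra hc
      push_neg at hc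
      exact hmem (h _ hc)
    rw [one_div, inv_pow]
    exact inv_anti₀ (by positivity) (pow_le_pow_right₀ (by norm_num) hge)

lemma dist01_le_one (x y : Conf) : dist01 x y ≤ 1 := by
  have := dist01_le_pow (x := x) (y := y) (m := 0) (by omega)
  simpa using this

lemma pow_le_dist01 {x y : Conf} {m : ℕ} (hm : 0 < m) (h : ∃ j, j < m ∧ x j ≠ y j) :
    (1/2 : ℝ) ^ (m - 1) ≤ dist01 x y := by
  obtain ⟨j, hj, hne⟩ := h
  have hxy : x ≠ y := fun he => hne (congrFun he j)
  unfold dist01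
  rw [if_neg hxy]
  have hle : sInf {n : ℕ | x n ≠ y n} ≤ m - 1 :=
    le_trans (Nat.sInf_le hne) (by omega)
  rw [one_div, inv_pow]
  exact inv_anti₀ (by positivity) (pow_le_pow_right₀ (by norm_num) hle)

lemma dist01_triangle (x y z : Conf) : dist01 x z ≤ dist01 x y + dist01 y z := by
  by_cases hxz : x = z
  · subst hxz
    simpa [dist01] using add_nonneg (dist01_nonneg x y) (dist01_nonneg y x)
  by_cases hxy : x = y
  · subst hxy; simp [dist01_nonneg, dist01]
  by_cases hyz : y = z
  · subst hyz
    simpa [dist01] using le_add_of_nonneg_left (dist01_nonneg x y)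
  have hSxz : {n : ℕ | x n ≠ z n}.Nonempty := Function.ne_iff.mp hxz
  set c := sInf {n : ℕ | x n ≠ z n} with hc
  have hcmem : x c ≠ z c := Nat.sInf_mem hSxz
  have : x c ≠ y c ∨ y c ≠ z c := by
    by_contra hcon
    push_neg at hcon
    exact hcmem (hcon.1 ▸ hcon.2)
  have hd : dist01 x z = ((2:ℝ) ^ c)⁻¹ := by rw [dist01, if_neg hxz]
  rcases this with h1 | h1
  · have : dist01 x y ≥ ((2:ℝ)^c)⁻¹ := by
      rw [dist01, if_neg hxy]
      exact inv_anti₀ (by positivity)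
        (pow_le_pow_right₀ (by norm_num) (Nat.sInf_le h1))
    rw [hd]
    exact le_add_of_le_of_nonneg this (dist01_nonneg y z)
  · have : dist01 y z ≥ ((2:ℝ)^c)⁻¹ := by
      rw [dist01, if_neg hyz]
      exact inv_anti₀ (by positivity)
        (pow_le_pow_right₀ (by norm_num) (Nat.sInf_le h1))
    rw [hd]
    exact le_add_of_nonneg_of_le (dist01_nonneg x y) this
def distSet (X : Set Conf) (x : Conf) : ℝ := sInf (dist01 x '' X)

lemma bddBelow_distSet (X : Set Conf) (x : Conf) : BddBelow (dist01 x '' X) :=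
  ⟨0, fun b ⟨y, _, he⟩ => he ▸ dist01_nonneg x y⟩

lemma distSet_nonneg {X : Set Conf} (hX : X.Nonempty) (x : Conf) : 0 ≤ distSet X x :=
  le_csInf (hX.image _) (fun b ⟨y, _, he⟩ => he ▸ dist01_nonneg x y)

lemma distSet_le {X : Set Conf} {y : Conf} (hy : y ∈ X) (x : Conf) :
    distSet X x ≤ dist01 x y :=
  csInf_le (bddBelow_distSet X x) ⟨y, hy, rfl⟩

lemma le_distSet {X : Set Conf} (hX : X.Nonempty) {x : Conf} {t : ℝ}
    (h : ∀ y ∈ X, t ≤ dist01 x y) : t ≤ distSet X x :=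
  le_csInf (hX.image _) (fun b ⟨y, hy, he⟩ => he ▸ h y hy)

lemma distSet_zero {X : Set Conf} {x : Conf} (hx : x ∈ X) : distSet X x = 0 := by
  refine le_antisymm ?_ (distSet_nonneg ⟨x, hx⟩ x)
  have := distSet_le hx x
  simpa [dist01] using this

lemma distSet_sub_le {X : Set Conf} (hX : X.Nonempty) (x y : Conf) :
    distSet X x ≤ distSet X y + dist01 x y := by
  rw [← sub_le_iff_le_add]
  refine le_csInf (hX.image _) ?_
  rintro b ⟨z, hz, rfl⟩
  rw [sub_le_iff_le_add]
  calc distSet X x ≤ dist01 x z := distSet_le hz x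
    _ ≤ dist01 x y + dist01 y z := dist01_triangle x y z
    _ = dist01 y z + dist01 x y := by ring

lemma abs_distSet_sub_le {X : Set Conf} (hX : X.Nonempty) (x y : Conf) :
    |distSet X x - distSet X y| ≤ dist01 x y := by
  rw [abs_sub_le_iff]
  constructor
  · linarith [distSet_sub_le hX x y]
  · have := distSet_sub_le hX y x
    rw [dist01_comm y x] at this
    linarith

lemma continuous_distSet {X : Set Conf} (hX : X.Nonempty) : Continuous (distSet X) := by
  rw [continuous_iff_continuousAt]
  intro x
  rw [ContinuousAt, Metric.tendsto_nhds]
  intro ε hε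
  obtain ⟨m, hm⟩ : ∃ m : ℕ, (1/2 : ℝ) ^ m < ε := exists_pow_lt_of_lt_one hε (by norm_num)
  have hU : {y : Conf | ∀ j < m, y j = x j} ∈ 𝓝 x := by
    have : {y : Conf | ∀ j < m, y j = x j} = ⋂ j ∈ Finset.range m, (fun y : Conf => y j) ⁻¹' {x j} := by
      ext y; simp [Set.mem_iInter]
    rw [this]
    refine IsOpen.mem_nhds (isOpen_biInter_finset fun j _ => ?_) ?_
    · exact (continuous_apply j).isOpen_preimage _ (isOpen_discrete _)
    · simp
  filter_upwards [hU] with y hy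
  rw [Real.dist_eq]
  calc |distSet X y - distSet X x| ≤ dist01 y x := abs_distSet_sub_le hX y x
    _ ≤ (1/2 : ℝ) ^ m := dist01_le_pow (fun j hj => hy j hj)
    _ < ε := hm

lemma shift_iter (x : Conf) (m : ℕ) : shiftMap^[m] x = fun n => x (n + m) := by
  induction m with
  | zero => simp
  | succ m ih =>
    rw [Function.iterate_succ_apply', ih]
    funext n
    show x (n + 1 + m) = x (n + (m + 1))
    congr 1; omega

lemma measurable_shiftMap : Measurable shiftMap :=
  measurable_pi_lambda _ fun n => measurable_pi_apply (n + 1)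
/-! ### Combinatorics of the language -/

def Flat (S : Finset (List Bool)) (u : List Bool) : Prop :=
  ∃ ws : List (List Bool), (∀ v ∈ ws, v ∈ S) ∧ ws.flatten = u

lemma flat_nil {S : Finset (List Bool)} : Flat S [] := ⟨[], by simp, rfl⟩

lemma flat_single {S : Finset (List Bool)} {w : List Bool} (h : w ∈ S) : Flat S w :=
  ⟨[w], by simpa using h, by simp⟩

lemma flat_append {S : Finset (List Bool)} {a b : List Bool} (ha : Flat S a) (hb : Flat S b) :
    Flat S (a ++ b) := by
  obtain ⟨wa, hwa, rfl⟩ := ha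
  obtain ⟨wb, hwb, rfl⟩ := hb
  refine ⟨wa ++ wb, ?_, by simp⟩
  intro v hv
  rcases List.mem_append.mp hv with h | h
  exacts [hwa v h, hwb v h]

lemma flat_flatten {S : Finset (List Bool)} {ls : List (List Bool)}
    (h : ∀ l ∈ ls, Flat S l) : Flat S ls.flatten := by
  induction ls with
  | nil => exact flat_nil
  | cons a t ih =>
    rw [List.flatten_cons]
    exact flat_append (h a (by simp)) (ih fun l hl => h l (by simp [hl]))

lemma flat_mono {S T : Finset (List Bool)} {u : List Bool} (hST : S ⊆ T) (h : Flat S u) :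
    Flat T u := by
  obtain ⟨ws, hws, rfl⟩ := h
  exact ⟨ws, fun v hv => hST (hws v hv), rfl⟩

lemma flat_mem_tupleConcat {S : Finset (List Bool)} :
    ∀ {m : ℕ} {u : List Bool}, u ∈ tupleConcat S m → Flat S u := by
  intro m
  induction m with
  | zero => intro u hu; simp [tupleConcat] at hu; exact hu ▸ flat_nil
  | succ m ih =>
    intro u hu
    simp only [tupleConcat, Finset.mem_image, Finset.mem_product] at hu
    obtain ⟨⟨a, b⟩, ⟨ha, hb⟩, rfl⟩ := hu
    exact flat_append (flat_single ha) (ih hb)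

lemma length_of_mem_tupleConcat {S : Finset (List Bool)} {ℓ : ℕ}
    (hS : ∀ v ∈ S, v.length = ℓ) :
    ∀ {m : ℕ} {u : List Bool}, u ∈ tupleConcat S m → u.length = m * ℓ := by
  intro m
  induction m with
  | zero => intro u hu; simp [tupleConcat] at hu; simp [hu]
  | succ m ih =>
    intro u hu
    simp only [tupleConcat, Finset.mem_image, Finset.mem_product] at hu
    obtain ⟨⟨a, b⟩, ⟨ha, hb⟩, rfl⟩ := hu
    simp [hS a ha, ih hb]
    ring

lemma tupleConcat_nonempty {S : Finset (List Bool)} (hS : S.Nonempty) (m : ℕ) :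
    (tupleConcat S m).Nonempty := by
  induction m with
  | zero => exact ⟨[], by simp [tupleConcat]⟩
  | succ m ih =>
    obtain ⟨a, ha⟩ := hS
    obtain ⟨b, hb⟩ := ih
    exact ⟨a ++ b, by
      simp only [tupleConcat, Finset.mem_image, Finset.mem_product]
      exact ⟨⟨a, b⟩, ⟨ha, hb⟩, rfl⟩⟩

/-- The connecting word `c_{k+1}` (built from level-`k` data). -/
def cw (N : ℕ → ℕ) (k : ℕ) : List Bool :=
  ((tupleConcat (Lk N k) (2 ^ ell N k + 1)).sort (· ≤ ·)).flatten

lemma ell_zero : ell N 0 = 5 := rfl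

lemma ell_succ (N : ℕ → ℕ) (k : ℕ) :
    ell N (k + 1) = (cw N k).length + N (k + 1) * ell N k := by
  by_cases h : k % 2 = 0 <;> simp [ell, consAB, cw, Lk, Ak, Bk, h]

lemma mem_Lk_succ_struct {N : ℕ → ℕ} {k : ℕ}
    (hlen : ∀ w ∈ Lk N k, w.length = ell N k) {w : List Bool} (hw : w ∈ Lk N (k + 1)) :
    ∃ t, w = cw N k ++ t ∧ Flat (Lk N k) t ∧ t.length = N (k + 1) * ell N k := by
  have hA : ∀ v ∈ Ak N k, v ∈ Lk N k := fun v hv => Finset.mem_union_left _ hv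
  have hB : ∀ v ∈ Bk N k, v ∈ Lk N k := fun v hv => Finset.mem_union_right _ hv
  by_cases h : k % 2 = 0
  · simp only [Lk, Ak, Bk, consAB, h, if_true, Finset.mem_union, Finset.mem_image] at hw
    rcases hw with ⟨a, ha, rfl⟩ | ⟨u, hu, rfl⟩
    · refine ⟨_, rfl, flat_flatten ?_, ?_⟩
      · intro l hl
        rw [List.eq_of_mem_replicate hl]
        exact flat_single (hA a ha)
      · simp [List.length_flatten, List.sum_replicate, hlen a (hA a ha), Nat.smul_one_eq_cast]
    · exact ⟨u, rfl, flat_mono Finset.subset_union_right (flat_mem_tupleConcat hu),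
        length_of_mem_tupleConcat (fun v hv => hlen v (hB v hv)) hu⟩
  · simp only [Lk, Ak, Bk, consAB, h, if_false, Finset.mem_union, Finset.mem_image] at hw
    rcases hw with ⟨u, hu, rfl⟩ | ⟨b, hb, rfl⟩
    · exact ⟨u, rfl, flat_mono Finset.subset_union_left (flat_mem_tupleConcat hu),
        length_of_mem_tupleConcat (fun v hv => hlen v (hA v hv)) hu⟩
    · refine ⟨_, rfl, flat_flatten ?_, ?_⟩
      · intro l hl
        rw [List.eq_of_mem_replicate hl]
        exact flat_single (hB b hb)
      · simp [List.length_flatten, List.sum_replicate, hlen b (hB b hb), Nat.smul_one_eq_cast]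

lemma Lk_length (N : ℕ → ℕ) : ∀ k, ∀ w ∈ Lk N k, w.length = ell N k := by
  intro k
  induction k with
  | zero =>
    intro w hw
    have : w ∈ Azero ∪ Bzero := hw
    fin_cases this <;> rfl
  | succ k ih =>
    intro w hw
    obtain ⟨t, rfl, _, ht⟩ := mem_Lk_succ_struct ih hw
    simp [ell_succ, ht]

lemma Ak_nonempty (N : ℕ → ℕ) : ∀ k, (Ak N k).Nonempty := by
  intro k
  induction k with
  | zero =>
    refine ⟨[false, false, false, false, false], ?_⟩
    show _ ∈ Azero
    decide
  | succ k ih =>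
    by_cases h : k % 2 = 0
    · simp only [Ak, consAB, h, if_true]
      exact (ih.image _)
    · simp only [Ak, consAB, h, if_false]
      exact ((tupleConcat_nonempty ih _).image _)

lemma Lk_nonempty (N : ℕ → ℕ) (k : ℕ) : (Lk N k).Nonempty := by
  obtain ⟨a, ha⟩ := Ak_nonempty N k
  exact ⟨a, Finset.mem_union_left _ ha⟩

lemma flat_cw (N : ℕ → ℕ) (k : ℕ) : Flat (Lk N k) (cw N k) := by
  refine flat_flatten fun l hl => ?_
  exact flat_mem_tupleConcat (Finset.mem_sort (α := List Bool) (· ≤ ·) |>.mp hl)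

lemma flat_Lk_succ {N : ℕ → ℕ} {k : ℕ} {w : List Bool} (hw : w ∈ Lk N (k + 1)) :
    Flat (Lk N k) w := by
  obtain ⟨t, rfl, hft, _⟩ := mem_Lk_succ_struct (Lk_length N k) hw
  exact flat_append (flat_cw N k) hft

lemma flat_down {N : ℕ → ℕ} {k : ℕ} {u : List Bool} (h : Flat (Lk N (k + 1)) u) :
    Flat (Lk N k) u := by
  obtain ⟨ws, hws, rfl⟩ := h
  exact flat_flatten fun l hl => flat_Lk_succ (hws l hl)

lemma flat_down_chain {N : ℕ → ℕ} : ∀ (d : ℕ) {j : ℕ} {u : List Bool},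
    Flat (Lk N (j + d)) u → Flat (Lk N j) u := by
  intro d
  induction d with
  | zero => intro j u h; exact h
  | succ d ih =>
    intro j u h
    have h' : Flat (Lk N (j + d)) u := by
      obtain ⟨ws, hws, rfl⟩ := h
      exact flat_flatten fun l hl => flat_Lk_succ (show l ∈ Lk N ((j + d) + 1) from hws l hl)
    exact ih h'

lemma flat_cw_down {N : ℕ → ℕ} {m j : ℕ} (hj : j ≤ m) : Flat (Lk N j) (cw N m) := by
  have : Flat (Lk N (j + (m - j))) (cw N m) := by
    rw [show j + (m - j) = m by omega]
    exact flat_cw N m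
  exact flat_down_chain _ this
/-! ### The canonical point of `X` -/

lemma getD_append_left {l₁ l₂ : List Bool} {n : ℕ} (h : n < l₁.length) :
    (l₁ ++ l₂).getD n false = l₁.getD n false := by
  rw [List.getD_eq_getElem _ _ (by rw [List.length_append]; omega),
    List.getElem_append_left h, List.getD_eq_getElem _ _ h]

lemma getD_append_right {l₁ l₂ : List Bool} {n : ℕ} (h₁ : l₁.length ≤ n)
    (h₂ : n < l₁.length + l₂.length) :
    (l₁ ++ l₂).getD n false = l₂.getD (n - l₁.length) false := by
  rw [List.getD_eq_getElem _ _ (by rw [List.length_append]; omega),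
    List.getElem_append_right h₁, List.getD_eq_getElem _ _ (by omega)]

lemma cw_prefix_mem {N : ℕ → ℕ} {k : ℕ} {w : List Bool} (hw : w ∈ Lk N (k + 1)) :
    cw N k <+: w := by
  obtain ⟨t, rfl, _, _⟩ := mem_Lk_succ_struct (Lk_length N k) hw
  exact List.prefix_append _ _

lemma cw_sort_ne_nil (N : ℕ → ℕ) (k : ℕ) :
    (tupleConcat (Lk N k) (2 ^ ell N k + 1)).sort (· ≤ ·) ≠ [] := by
  intro h
  have h1 := Finset.length_sort (α := List Bool) (· ≤ ·)
    (s := tupleConcat (Lk N k) (2 ^ ell N k + 1))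
  rw [h] at h1
  obtain ⟨u, hu⟩ := tupleConcat_nonempty (Lk_nonempty N k) (2 ^ ell N k + 1)
  have := Finset.card_pos.mpr ⟨u, hu⟩
  simp at h1
  omega

lemma cw_length_ge (N : ℕ → ℕ) (k : ℕ) : 2 * ell N k ≤ (cw N k).length := by
  obtain ⟨hd, tl, hcons⟩ := List.exists_cons_of_ne_nil (cw_sort_ne_nil N k)
  have hhd : hd ∈ tupleConcat (Lk N k) (2 ^ ell N k + 1) := by
    rw [← Finset.mem_sort (α := List Bool) (· ≤ ·), hcons]
    simp
  have hlen : hd.length = (2 ^ ell N k + 1) * ell N k :=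
    length_of_mem_tupleConcat (Lk_length N k) hhd
  have h2 : 2 * ell N k ≤ (2 ^ ell N k + 1) * ell N k := by
    have : 2 ≤ 2 ^ ell N k + 1 := by
      have := Nat.one_le_two_pow (n := ell N k)
      omega
    exact Nat.mul_le_mul_right _ this
  have : (cw N k).length = hd.length + tl.flatten.length := by
    rw [cw, hcons, List.flatten_cons, List.length_append]
  omega

lemma ell_ge (N : ℕ → ℕ) : ∀ k, k + 5 ≤ ell N k := by
  intro k
  induction k with
  | zero => simp [ell_zero]
  | succ k ih =>
    have h1 := cw_length_ge N k
    have h2 := ell_succ N k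
    omega

lemma ell_pos (N : ℕ → ℕ) (k : ℕ) : 0 < ell N k := by have := ell_ge N k; omega

lemma cw_prefix_succ (N : ℕ → ℕ) (k : ℕ) : cw N k <+: cw N (k + 1) := by
  obtain ⟨hd, tl, hcons⟩ := List.exists_cons_of_ne_nil (cw_sort_ne_nil N (k + 1))
  have hhd : hd ∈ tupleConcat (Lk N (k + 1)) (2 ^ ell N (k + 1) + 1) := by
    rw [← Finset.mem_sort (α := List Bool) (· ≤ ·), hcons]
    simp
  simp only [tupleConcat, Finset.mem_image, Finset.mem_product] at hhd
  obtain ⟨⟨a, b⟩, ⟨ha, hb⟩, rfl⟩ := hhd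
  have h1 : cw N k <+: a := cw_prefix_mem ha
  have h2 : cw N (k + 1) = a ++ (b ++ tl.flatten) := by
    rw [cw, hcons, List.flatten_cons, List.append_assoc]
  rw [h2]
  exact h1.trans (List.prefix_append _ _)

lemma cw_prefix_le {N : ℕ → ℕ} {j m : ℕ} (h : j ≤ m) : cw N j <+: cw N m := by
  induction m with
  | zero => rw [Nat.le_zero.mp h]
  | succ m ih =>
    rcases Nat.lt_or_ge j (m + 1) with h' | h'
    · exact (ih (by omega)).trans (cw_prefix_succ N m)
    · rw [show j = m + 1 by omega]

/-- The canonical point of `X`: the limit of the nested words `c_k`. -/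
def zpt (N : ℕ → ℕ) : Conf := fun n => (cw N n).getD n false

lemma lt_cw_length {N : ℕ → ℕ} {n m : ℕ} (h : n ≤ m) : n < (cw N m).length := by
  have h1 := cw_length_ge N m
  have h2 := ell_ge N m
  omega

lemma zpt_eq {N : ℕ → ℕ} {n m : ℕ} (hn : n < (cw N m).length) :
    zpt N n = (cw N m).getD n false := by
  rcases Nat.le_total n m with h | h
  · have hpre := cw_prefix_le (N := N) h
    have hn' : n < (cw N n).length := lt_cw_length le_rfl
    rw [zpt, List.getD_eq_getElem _ _ hn', List.getD_eq_getElem _ _ hn]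
    exact hpre.getElem hn'
  · have hpre := cw_prefix_le (N := N) h
    rw [zpt, List.getD_eq_getElem _ _ (lt_cw_length (le_refl n)), List.getD_eq_getElem _ _ hn]
    exact (hpre.getElem hn).symm

lemma flatten_block {S : Finset (List Bool)} {ℓ : ℕ} (hS : ∀ v ∈ S, v.length = ℓ)
    (hℓ : 0 < ℓ) : ∀ (ws : List (List Bool)), (∀ v ∈ ws, v ∈ S) → ∀ i : ℕ,
    (i + 1) * ℓ ≤ ws.flatten.length →
    ∃ v ∈ S, ∀ t, t < ℓ → ws.flatten.getD (i * ℓ + t) false = v.getD t false := by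
  intro ws
  induction ws generalizing ℓ with
  | nil =>
    intro _ i hi
    exfalso
    have : 0 < (i + 1) * ℓ := Nat.mul_pos (by omega) hℓ
    simp at hi
    omega
  | cons u ws ih =>
    intro hmem i hi
    have hu : u.length = ℓ := hS u (hmem u (by simp))
    have hflat : (u :: ws).flatten = u ++ ws.flatten := List.flatten_cons
    cases i with
    | zero =>
      refine ⟨u, hmem u (by simp), fun t ht => ?_⟩
      rw [hflat, zero_mul, zero_add]
      exact getD_append_left (by omega)
    | succ i' =>
      have hlen : (u :: ws).flatten.length = ℓ + ws.flatten.length := by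
        rw [hflat, List.length_append, hu]
      have e2 : (i' + 1) * ℓ = i' * ℓ + ℓ := by ring
      have e1 : (i' + 1 + 1) * ℓ = i' * ℓ + ℓ + ℓ := by ring
      have hi' : (i' + 1) * ℓ ≤ ws.flatten.length := by omega
      obtain ⟨v, hv, hvt⟩ := ih hS hℓ (fun v hv => hmem v (by simp [hv])) i' hi'
      refine ⟨v, hv, fun t ht => ?_⟩
      rw [hflat, getD_append_right (by omega) (by omega)]
      rw [show (i' + 1) * ℓ + t - u.length = i' * ℓ + t by omega]
      exact hvt t ht
lemma zpt_block_mem (N : ℕ → ℕ) (j i : ℕ) :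
    List.ofFn (fun t : Fin (ell N j) => zpt N (i * ell N j + t)) ∈ Lk N j := by
  set ℓ := ell N j with hℓdef
  have hℓ : 0 < ℓ := ell_pos N j
  set m := max j ((i + 1) * ℓ) with hm
  have hcwlen : (i + 1) * ℓ ≤ (cw N m).length := by
    have h1 := cw_length_ge N m
    have h2 := ell_ge N m
    have h3 : (i + 1) * ℓ ≤ m := le_max_right _ _
    omega
  obtain ⟨ws, hws, hflat⟩ := flat_cw_down (N := N) (le_max_left j ((i + 1) * ℓ))
  obtain ⟨v, hv, hvt⟩ := flatten_block (Lk_length N j) hℓ ws hws i (by rw [hflat]; exact hcwlen)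
  have hveq : List.ofFn (fun t : Fin ℓ => zpt N (i * ℓ + t)) = v := by
    refine List.ext_getElem ?_ ?_
    · simp [Lk_length N j v hv, hℓdef]
    · intro t h1 h2
      rw [List.getElem_ofFn]
      have htℓ : t < ℓ := by simpa using h1
      have hlt : i * ℓ + t < (cw N m).length := by
        have : (i + 1) * ℓ = i * ℓ + ℓ := by ring
        omega
      rw [← hℓdef] at hvt
      rw [zpt_eq hlt, ← hflat, hvt t htℓ, List.getD_eq_getElem _ _ (by omega)]
  rw [hveq]
  exact hv

lemma isConcat_zpt (N : ℕ → ℕ) (j : ℕ) : IsConcat (Lk N j) (zpt N) := by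
  set ℓ := ell N j with hℓdef
  have hℓ : 0 < ℓ := ell_pos N j
  refine ⟨fun i => List.ofFn (fun t : Fin ℓ => zpt N (i * ℓ + t)), fun i => ⟨zpt_block_mem N j i, ?_⟩, ?_⟩
  · intro h
    have hlen' := congrArg List.length h
    simp only [List.length_ofFn, List.length_nil] at hlen'
    omega
  · intro i t ht
    have hsum : (∑ r ∈ Finset.range i,
        (List.ofFn (fun s : Fin ℓ => zpt N (r * ℓ + s))).length) = i * ℓ := by
      simp [List.length_ofFn, Finset.sum_const, Nat.smul_one_eq_cast]
    rw [hsum]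
    have ht' : t < ℓ := by simpa using ht
    rw [List.get_eq_getElem, List.getElem_ofFn]

lemma zpt_mem_Xsub (N : ℕ → ℕ) : zpt N ∈ Xsub N := by
  refine Set.mem_iInter.mpr fun k => ?_
  exact ⟨0, zpt N, isConcat_zpt N (k + 1), funext fun m => by rw [Nat.add_zero]⟩

lemma Xsub_nonempty (N : ℕ → ℕ) : (Xsub N).Nonempty := ⟨zpt N, zpt_mem_Xsub N⟩

lemma shift_mem_langShift {L : Finset (List Bool)} {y : Conf} (h : y ∈ langShift L) :
    shiftMap y ∈ langShift L := by
  obtain ⟨n, z, hz, rfl⟩ := h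
  exact ⟨n + 1, z, hz, funext fun m => by
    show z (m + 1 + n) = z (m + (n + 1))
    congr 1; omega⟩

lemma shift_mem_Xsub {N : ℕ → ℕ} {x : Conf} (h : x ∈ Xsub N) : shiftMap x ∈ Xsub N := by
  rw [Xsub, Set.mem_iInter] at h ⊢
  exact fun k => shift_mem_langShift (h k)

lemma shift_iter_mem_Xsub {N : ℕ → ℕ} {x : Conf} (h : x ∈ Xsub N) (m : ℕ) :
    shiftMap^[m] x ∈ Xsub N := by
  induction m with
  | zero => exact h
  | succ m ih => rw [Function.iterate_succ_apply']; exact shift_mem_Xsub ih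

/-! ### The geometric lemma -/

lemma mem_Yset_of_agree {N : ℕ → ℕ} {k : ℕ} (hk : 1 ≤ k) {x y : Conf} (hy : y ∈ Xsub N)
    (hagree : ∀ j < 2 * ell N k, x j = y j) : x ∈ Yset N k := by
  set ℓ := ell N k with hℓdef
  have hℓ : 0 < ℓ := ell_pos N k
  have hy' : y ∈ langShift (Lk N k) := by
    have := Set.mem_iInter.mp hy (k - 1)
    rwa [show k - 1 + 1 = k by omega] at this
  obtain ⟨n, z, ⟨w, hw, hz⟩, rfl⟩ := hy'
  have hwlen : ∀ r, (w r).length = ℓ := fun r => Lk_length N k (w r) (hw r).1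
  have hsum : ∀ i, (∑ r ∈ Finset.range i, (w r).length) = i * ℓ := by
    intro i
    rw [Finset.sum_congr rfl (fun r _ => hwlen r)]
    simp [Nat.smul_one_eq_cast]
  obtain ⟨m, i, hiℓ, him⟩ : ∃ m i, i < ℓ ∧ i + n = m * ℓ := by
    have hd := Nat.div_add_mod' n ℓ
    by_cases h0 : n % ℓ = 0
    · exact ⟨n / ℓ, 0, hℓ, by omega⟩
    · refine ⟨n / ℓ + 1, ℓ - n % ℓ, ?_, ?_⟩
      · have := Nat.mod_lt n hℓ
        omega
      · rw [Nat.add_mul, Nat.one_mul]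
        have := Nat.mod_lt n hℓ
        omega
  refine ⟨i, hiℓ, ?_⟩
  have hwin : windowWord (fun m' => z (m' + n)) i ℓ = w m := by
    refine List.ext_getElem (by simp [windowWord, hwlen]) ?_
    intro t h1 h2
    have ht : t < ℓ := by simpa [windowWord] using h1
    have ht' : t < (w m).length := by rw [hwlen]; exact ht
    simp only [windowWord]
    rw [List.getElem_ofFn]
    show z (i + t + n) = (w m)[t]
    have := hz m t ht'
    rw [hsum m] at this
    rw [show i + t + n = m * ℓ + t by omega]
    rw [this]
    simp
  have hwin2 : windowWord x i ℓ = windowWord (fun m' => z (m' + n)) i ℓ := by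
    refine List.ext_getElem (by simp [windowWord]) ?_
    intro t h1 h2
    have ht : t < ℓ := by simpa [windowWord] using h1
    simp only [windowWord]
    rw [List.getElem_ofFn, List.getElem_ofFn]
    exact hagree (i + t) (by omega)
  rw [← hℓdef, hwin2, hwin]
  exact (hw m).1
/-! ### Entropy estimates -/

lemma cylinder_measurableSet {n : ℕ} (w : Fin n → Bool) :
    MeasurableSet (_root_.cylinder w) := by
  have : _root_.cylinder w = ⋂ i : Fin n, (fun x : Conf => x i) ⁻¹' {w i} := by
    ext x
    simp only [Set.mem_iInter, Set.mem_preimage, Set.mem_singleton_iff]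
    exact Iff.rfl
  rw [this]
  exact MeasurableSet.iInter fun i => (measurable_pi_apply _) (measurableSet_singleton _)

lemma sum_cylinder_eq_one {n : ℕ} (μ : Measure Conf) [IsProbabilityMeasure μ] :
    ∑ w : Fin n → Bool, (μ (_root_.cylinder w)).toReal = 1 := by
  have hd : Pairwise (Function.onFun Disjoint fun w : Fin n → Bool => _root_.cylinder w) := by
    intro w w' hww
    rw [Function.onFun, Set.disjoint_left]
    intro x hx hx'
    exact hww (funext fun i => (hx i).symm.trans (hx' i))
  have hu : ⋃ w : Fin n → Bool, _root_.cylinder w = Set.univ :=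
    Set.eq_univ_of_forall fun x => Set.mem_iUnion.mpr ⟨fun i => x i, fun i => rfl⟩
  have h1 : ∑ w : Fin n → Bool, μ (_root_.cylinder w) = 1 := by
    rw [← tsum_fintype (L := SummationFilter.unconditional _), ← measure_iUnion hd fun w => cylinder_measurableSet w, hu, measure_univ]
  have h2 := congrArg ENNReal.toReal h1
  rw [ENNReal.toReal_sum (fun w _ => measure_ne_top μ _)] at h2
  simpa using h2

lemma measure_toReal_le_one {μ : Measure Conf} [IsProbabilityMeasure μ] (s : Set Conf) :
    (μ s).toReal ≤ 1 := by
  have h := prob_le_one (μ := μ) (s := s)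
  have := ENNReal.toReal_mono (by simp) h
  simpa using this

lemma Hblock_nonneg (μ : Measure Conf) [IsProbabilityMeasure μ] (n : ℕ) : 0 ≤ Hblock μ n := by
  rw [Hblock, neg_nonneg]
  apply Finset.sum_nonpos
  intro w _
  exact mul_nonpos_of_nonneg_of_nonpos ENNReal.toReal_nonneg
    (Real.logb_nonpos one_lt_two ENNReal.toReal_nonneg (measure_toReal_le_one _))

lemma Hblock_le (μ : Measure Conf) [IsProbabilityMeasure μ] (n : ℕ) : Hblock μ n ≤ n := by
  classical
  set p : (Fin n → Bool) → ℝ := fun w => (μ (_root_.cylinder w)).toReal with hp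
  have hp0 : ∀ w, 0 ≤ p w := fun w => ENNReal.toReal_nonneg
  have hsum : ∑ w, p w = 1 := sum_cylinder_eq_one μ
  have hH : Hblock μ n = (∑ w, Real.negMulLog (p w)) / Real.log 2 := by
    have hterm : ∀ w : Fin n → Bool,
        (μ (_root_.cylinder w)).toReal * Real.logb 2 (μ (_root_.cylinder w)).toReal
          = -(Real.negMulLog (p w) / Real.log 2) := by
      intro w
      simp only [Real.negMulLog, Real.logb, hp]
      ring
    rw [Hblock, Finset.sum_congr rfl (fun w _ => hterm w), Finset.sum_neg_distrib, neg_neg,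
      Finset.sum_div]
  set s := Finset.univ.filter (fun w => p w ≠ 0) with hs
  have hsum' : ∑ w ∈ s, p w = 1 := by rw [hs, Finset.sum_filter_ne_zero]; exact hsum
  have hppos : ∀ w ∈ s, 0 < p w := by
    intro w hw
    rw [hs, Finset.mem_filter] at hw
    exact lt_of_le_of_ne (hp0 w) (Ne.symm hw.2)
  have hsub : ∑ w, Real.negMulLog (p w) = ∑ w ∈ s, p w * Real.log (p w)⁻¹ := by
    have h1 : ∑ w, Real.negMulLog (p w) = ∑ w ∈ s, Real.negMulLog (p w) := by
      refine (Finset.sum_subset (Finset.filter_subset _ _) ?_).symm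
      intro w _ hw
      have hzero : p w = 0 := by
        by_contra hne
        exact hw (Finset.mem_filter.mpr ⟨Finset.mem_univ w, hne⟩)
      simp [hzero, Real.negMulLog_zero]
    rw [h1]
    refine Finset.sum_congr rfl fun w hw => ?_
    rw [Real.log_inv]
    simp only [Real.negMulLog]
    ring
  have hjen : ∑ w ∈ s, p w • Real.log ((p w)⁻¹) ≤ Real.log (∑ w ∈ s, p w • (p w)⁻¹) := by
    refine (strictConcaveOn_log_Ioi.concaveOn).le_map_sum (fun w hw => hp0 w) hsum' ?_
    intro w hw
    exact Set.mem_Ioi.mpr (inv_pos.mpr (hppos w hw))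
  have hsc : ∑ w ∈ s, p w • (p w)⁻¹ = (s.card : ℝ) := by
    rw [Finset.sum_congr rfl (fun w hw => by
      rw [smul_eq_mul, mul_inv_cancel₀ (hppos w hw).ne'])]
    simp
  have hcard : (s.card : ℝ) ≤ (2 : ℝ) ^ n := by
    have h1 : s.card ≤ Fintype.card (Fin n → Bool) := by
      simpa using Finset.card_filter_le Finset.univ (fun w => p w ≠ 0)
    have h2 : Fintype.card (Fin n → Bool) = 2 ^ n := by simp
    calc (s.card : ℝ) ≤ (Fintype.card (Fin n → Bool) : ℝ) := by exact_mod_cast h1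
      _ = (2 : ℝ) ^ n := by rw [h2]; push_cast; ring
  have hlog : ∑ w, Real.negMulLog (p w) ≤ n * Real.log 2 := by
    rw [hsub]
    calc ∑ w ∈ s, p w * Real.log (p w)⁻¹ = ∑ w ∈ s, p w • Real.log ((p w)⁻¹) := by
          simp [smul_eq_mul]
      _ ≤ Real.log (∑ w ∈ s, p w • (p w)⁻¹) := hjen
      _ = Real.log (s.card : ℝ) := by rw [hsc]
      _ ≤ Real.log ((2 : ℝ) ^ n) := by
          have hsne : 0 < s.card := by
            rcases Finset.eq_empty_or_nonempty s with he | hne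
            · rw [he] at hsum'; simp at hsum'
            · exact Finset.card_pos.mpr hne
          exact Real.log_le_log (by exact_mod_cast hsne) hcard
      _ = n * Real.log 2 := by rw [Real.log_pow]
  rw [hH, div_le_iff₀ (Real.log_pos one_lt_two)]
  exact hlog

lemma Hblock_div_le_one (μ : Measure Conf) [IsProbabilityMeasure μ] (n : ℕ) :
    Hblock μ n / n ≤ 1 := by
  cases n with
  | zero => simp
  | succ n =>
    rw [div_le_one (by positivity)]
    exact_mod_cast Hblock_le μ (n + 1)

lemma Hblock_div_nonneg (μ : Measure Conf) [IsProbabilityMeasure μ] (n : ℕ) :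
    0 ≤ Hblock μ n / n :=
  div_nonneg (Hblock_nonneg μ n) (Nat.cast_nonneg n)

lemma entropy_le_one (μ : Measure Conf) [IsProbabilityMeasure μ] : entropy μ ≤ 1 := by
  rw [entropy]
  refine limsup_le_of_le ?_ (Eventually.of_forall fun n => Hblock_div_le_one μ n)
  exact isCoboundedUnder_le_of_eventually_le atTop
    (Eventually.of_forall fun n => Hblock_div_nonneg μ n)

lemma entropy_nonneg (μ : Measure Conf) [IsProbabilityMeasure μ] : 0 ≤ entropy μ := by
  rw [entropy]
  refine le_limsup_of_frequently_le (Frequently.of_forall fun n => Hblock_div_nonneg μ n) ?_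
  exact ⟨1, by
    rw [Filter.eventually_map]
    exact Eventually.of_forall fun n => Hblock_div_le_one μ n⟩
/-! ### The periodic approximating measure -/

lemma map_finset_sum_measure {ι : Type*} (s : Finset ι) (μ : ι → Measure Conf)
    {f : Conf → Conf} (hf : Measurable f) :
    (∑ i ∈ s, μ i).map f = ∑ i ∈ s, (μ i).map f := by
  classical
  induction s using Finset.induction with
  | empty => simp [Measure.map_zero]
  | insert a s h ih =>
    rw [Finset.sum_insert h, Measure.map_add _ _ hf, ih, Finset.sum_insert h]

lemma continuous_phiX (N : ℕ → ℕ) : Continuous (phiX (Xsub N)) := by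
  have : phiX (Xsub N) = fun y => -distSet (Xsub N) y := rfl
  rw [this]
  exact (continuous_distSet (Xsub_nonempty N)).neg

lemma hasCompactSupport_of_conf (f : Conf → ℝ) : HasCompactSupport f :=
  IsCompact.of_isClosed_subset isCompact_univ (isClosed_tsupport _) (Set.subset_univ _)

lemma exists_good_inv_measure (N : ℕ → ℕ) (P : ℕ) (hP : 0 < P) :
    ∃ ν : Measure Conf, IsInvProb ν ∧ -(P : ℝ)⁻¹ ≤ ∫ x, phiX (Xsub N) x ∂ν := by
  haveI : NeZero P := ⟨hP.ne'⟩
  set x₀ := zpt N with hx₀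
  set q : Fin P → Conf := fun i => fun n => x₀ ((n + i.val) % P) with hq
  have hq_shift : ∀ i : Fin P, shiftMap (q i) = q (i + 1) := by
    intro i
    funext n
    show x₀ ((n + 1 + i.val) % P) = x₀ ((n + (i + 1 : Fin P).val) % P)
    have h1 : (i + 1 : Fin P).val = (i.val + 1 % P) % P := by
      rw [Fin.add_def, Fin.val_one']
    rw [h1, Nat.add_mod_mod, ← Nat.add_assoc, Nat.add_mod_mod,
      show n + i.val + 1 = n + 1 + i.val by omega]
  set ν : Measure Conf := (P : ℝ≥0∞)⁻¹ • ∑ i : Fin P, Measure.dirac (q i) with hν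
  have hPtop : (P : ℝ≥0∞) ≠ ∞ := ENNReal.natCast_ne_top P
  have hP0 : (P : ℝ≥0∞) ≠ 0 := by
    simp only [ne_eq, Nat.cast_eq_zero]
    omega
  have hprob : IsProbabilityMeasure ν := by
    constructor
    rw [hν, Measure.smul_apply, Measure.finset_sum_apply]
    simp only [measure_univ, Finset.sum_const, Finset.card_univ, Fintype.card_fin,
      nsmul_eq_mul, mul_one, smul_eq_mul]
    exact ENNReal.inv_mul_cancel hP0 hPtop
  have hinv : ν.map shiftMap = ν := by
    rw [hν, Measure.map_smul, map_finset_sum_measure _ _ measurable_shiftMap]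
    congr 1
    rw [Finset.sum_congr rfl (fun i _ => by
      rw [Measure.map_dirac' measurable_shiftMap, hq_shift i])]
    exact Fintype.sum_equiv (Equiv.addRight (1 : Fin P))
      (fun i => Measure.dirac (q (i + 1))) (fun i => Measure.dirac (q i)) (fun i => rfl)
  have hφcont := continuous_phiX N
  have hsm : StronglyMeasurable (phiX (Xsub N)) := hφcont.stronglyMeasurable
  have hint : ∀ i : Fin P, Integrable (phiX (Xsub N)) (Measure.dirac (q i)) := fun i =>
    hφcont.integrable_of_hasCompactSupport (hasCompactSupport_of_conf _)
  have hival : ∫ x, phiX (Xsub N) x ∂ν = (P : ℝ)⁻¹ * ∑ i : Fin P, phiX (Xsub N) (q i) := by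
    rw [hν, integral_smul_measure, integral_finset_sum_measure (fun i _ => hint i)]
    rw [Finset.sum_congr rfl (fun i _ => integral_dirac' _ _ hsm)]
    simp [smul_eq_mul, ENNReal.toReal_inv]
  have hbound : ∀ i : Fin P, -((1/2 : ℝ) ^ (P - i.val)) ≤ phiX (Xsub N) (q i) := by
    intro i
    have hXmem : shiftMap^[i.val] x₀ ∈ Xsub N := shift_iter_mem_Xsub (zpt_mem_Xsub N) i.val
    have hd : distSet (Xsub N) (q i) ≤ (1/2 : ℝ) ^ (P - i.val) := by
      refine le_trans (distSet_le hXmem (q i)) (dist01_le_pow ?_)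
      intro j hj
      rw [shift_iter]
      show x₀ ((j + i.val) % P) = x₀ (j + i.val)
      congr 1
      have : j + i.val < P := by omega
      exact Nat.mod_eq_of_lt this
    have : phiX (Xsub N) (q i) = -distSet (Xsub N) (q i) := rfl
    rw [this]
    linarith
  have hsumgeo : ∑ i : Fin P, ((1/2 : ℝ)) ^ (P - i.val) ≤ 1 := by
    rw [Fin.sum_univ_eq_sum_range (fun r => (1/2 : ℝ) ^ (P - r)) P]
    rw [← Finset.sum_range_reflect]
    have hstep : ∑ r ∈ Finset.range P, ((1/2 : ℝ)) ^ (P - (P - 1 - r))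
        = ∑ r ∈ Finset.range P, ((1/2 : ℝ)) ^ r * (1/2) := by
      refine Finset.sum_congr rfl fun r hr => ?_
      rw [show P - (P - 1 - r) = r + 1 by
        have := Finset.mem_range.mp hr
        omega, pow_succ]
    rw [hstep, ← Finset.sum_mul]
    have := sum_geometric_two_le P
    nlinarith [Finset.sum_nonneg (fun r (_ : r ∈ Finset.range P) => pow_nonneg (by norm_num : (0:ℝ) ≤ 1/2) r)]
  refine ⟨ν, ⟨hprob, hinv⟩, ?_⟩
  rw [hival]
  have h1 : -(1 : ℝ) ≤ ∑ i : Fin P, phiX (Xsub N) (q i) := by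
    have h2 : ∑ i : Fin P, -((1/2 : ℝ) ^ (P - i.val)) ≤ ∑ i : Fin P, phiX (Xsub N) (q i) :=
      Finset.sum_le_sum fun i _ => hbound i
    rw [Finset.sum_neg_distrib] at h2
    linarith
  have hPinv : (0 : ℝ) ≤ (P : ℝ)⁻¹ := by positivity
  calc -(P : ℝ)⁻¹ = (P : ℝ)⁻¹ * (-1) := by ring
    _ ≤ (P : ℝ)⁻¹ * ∑ i : Fin P, phiX (Xsub N) (q i) :=
      mul_le_mul_of_nonneg_left h1 hPinv

lemma measurableSet_Yset (N : ℕ → ℕ) (k : ℕ) : MeasurableSet (Yset N k) := by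
  have hrw : Yset N k = ⋃ i ∈ Finset.range (ell N k), ⋃ u ∈ Lk N k,
      {x : Conf | ∀ j : Fin (ell N k), x (i + j) = u.getD j false} := by
    ext x
    simp only [Yset, Set.mem_setOf_eq, Set.mem_iUnion, Finset.mem_range]
    constructor
    · rintro ⟨i, hi, hw⟩
      refine ⟨i, hi, windowWord x i (ell N k), hw, ?_⟩
      intro j
      rw [List.getD_eq_getElem _ _ (by
        simp only [windowWord, List.length_ofFn]
        exact j.isLt)]
      simp only [windowWord]
      rw [List.getElem_ofFn]
    · rintro ⟨i, hi, u, hu, hx⟩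
      refine ⟨i, hi, ?_⟩
      have hlen : u.length = ell N k := Lk_length N k u hu
      have heq : windowWord x i (ell N k) = u := by
        refine List.ext_getElem (by simp [windowWord, hlen]) ?_
        intro t h1 h2
        simp only [windowWord]
        rw [List.getElem_ofFn]
        have ht : t < ell N k := by simpa [windowWord] using h1
        have := hx ⟨t, ht⟩
        rw [this, List.getD_eq_getElem _ _ (by omega)]
      rw [heq]
      exact hu
  rw [hrw]
  refine Set.Finite.measurableSet_biUnion (Finset.range _).finite_toSet fun i _ => ?_
  refine Set.Finite.measurableSet_biUnion (Lk N k).finite_toSet fun u _ => ?_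
  have : {x : Conf | ∀ j : Fin (ell N k), x (i + j) = u.getD j false} =
      ⋂ j : Fin (ell N k), (fun x : Conf => x (i + j)) ⁻¹' {u.getD j false} := by
    ext x; simp
  rw [this]
  exact MeasurableSet.iInter fun j => (measurable_pi_apply _) (measurableSet_singleton _)

/-- For any parameter sequence `(N_k)` and any `k ≥ 1`, with
`β = 2^{3ℓ_k}`, every equilibrium state `μ` for `β φ_X` satisfies
`μ(Y_k) > 1 - 2^{-ℓ_k}`. -/
theorem stmt4 (N : ℕ → ℕ) (hN : ∀ k, 0 < N k) (k : ℕ) (hk : 1 ≤ k)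
    (μ : Measure Conf)
    (hμ : IsEquilibriumState (phiX (Xsub N)) ((2 : ℝ) ^ (3 * ell N k)) μ) :
    1 - ((2 : ℝ≥0∞) ^ ell N k)⁻¹ < μ (Yset N k) := by
  classical
  obtain ⟨⟨hμprob, _hμinv⟩, hmax⟩ := hμ
  haveI := hμprob
  set ℓ := ell N k with hℓdef
  have hℓ5 : 5 ≤ ℓ := by have := ell_ge N k; omega
  have hXne : (Xsub N).Nonempty := Xsub_nonempty N
  set P : ℕ := 2 ^ (3 * ℓ + 2) with hPdef
  have hPpos : 0 < P := by positivity
  obtain ⟨ν, hνinv, hνφ⟩ := exists_good_inv_measure N P hPpos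
  haveI := hνinv.1
  have key := hmax ν hνinv
  set β : ℝ := (2 : ℝ) ^ (3 * ℓ) with hβ
  have hβpos : 0 < β := by positivity
  have hφeq : phiX (Xsub N) = fun y => -distSet (Xsub N) y := rfl
  have hgcont := continuous_distSet hXne
  have hgint : Integrable (distSet (Xsub N)) μ :=
    hgcont.integrable_of_hasCompactSupport (hasCompactSupport_of_conf _)
  have hφint_eq : ∫ x, phiX (Xsub N) x ∂μ = -∫ x, distSet (Xsub N) x ∂μ := by
    rw [hφeq]
    exact integral_neg _
  set D := ∫ x, distSet (Xsub N) x ∂μ with hD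
  have hβP : β * (P : ℝ)⁻¹ = 1/4 := by
    rw [hβ, hPdef]
    push_cast
    rw [pow_add, mul_inv, ← mul_assoc, mul_inv_cancel₀ (by positivity)]
    norm_num
  have hent_ν := entropy_nonneg ν
  have hent_μ := entropy_le_one μ
  have h1' : -(1/4 : ℝ) ≤ β * ∫ x, phiX (Xsub N) x ∂ν := by
    calc -(1/4 : ℝ) = β * (-(P : ℝ)⁻¹) := by rw [mul_neg, hβP]
      _ ≤ β * ∫ x, phiX (Xsub N) x ∂ν := mul_le_mul_of_nonneg_left hνφ hβpos.le
  rw [hφint_eq] at key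
  have hkey2 : β * D ≤ 1 + 1/4 := by
    have hr : β * -D = -(β * D) := by ring
    rw [hr] at key
    linarith
  -- Markov inequality
  set c := (μ ((Yset N k)ᶜ)).toReal with hc
  have hYm := measurableSet_Yset N k
  have hlb : ∀ x : Conf,
      ((1/2 : ℝ) ^ (2*ℓ - 1)) * ((Yset N k)ᶜ).indicator (fun _ => (1:ℝ)) x
        ≤ distSet (Xsub N) x := by
    intro x
    by_cases hx : x ∈ (Yset N k)ᶜ
    · rw [Set.indicator_of_mem hx, mul_one]
      refine le_distSet hXne ?_
      intro y hy
      have hex : ∃ j, j < 2*ℓ ∧ x j ≠ y j := by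
        by_contra hcon
        push_neg at hcon
        exact hx (mem_Yset_of_agree hk hy (fun j hj => hcon j hj))
      exact pow_le_dist01 (by omega) hex
    · rw [Set.indicator_of_notMem hx, mul_zero]
      exact distSet_nonneg hXne x
  have hind : Integrable (((Yset N k)ᶜ).indicator (fun _ => (1:ℝ))) μ :=
    (integrable_const (1:ℝ)).indicator hYm.compl
  have hMar : ((1/2 : ℝ) ^ (2*ℓ - 1)) * c ≤ D := by
    have h2 : ∫ x, ((1/2 : ℝ) ^ (2*ℓ - 1)) * ((Yset N k)ᶜ).indicator (fun _ => (1:ℝ)) x ∂μ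
        ≤ D := integral_mono (hind.const_mul _) hgint hlb
    rw [integral_const_mul, integral_indicator_const (1:ℝ) hYm.compl] at h2
    rw [smul_eq_mul, mul_one] at h2
    exact h2
  have hc0 : 0 ≤ c := ENNReal.toReal_nonneg
  have htβ : ((1/2 : ℝ) ^ (2*ℓ - 1)) * β = 2 * (2:ℝ)^ℓ := by
    rw [hβ, show 3*ℓ = (2*ℓ-1) + (ℓ+1) by omega, pow_add, ← mul_assoc, ← mul_pow]
    norm_num
    rw [pow_succ]
    ring
  have hcb : c * (2:ℝ)^ℓ ≤ 5/8 := by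
    have e1 : (((1/2 : ℝ) ^ (2*ℓ - 1)) * c) * β ≤ (5/4 : ℝ) := by
      have := mul_le_mul_of_nonneg_right hMar hβpos.le
      have hco : D * β = β * D := by ring
      linarith
    have e2 : (((1/2 : ℝ) ^ (2*ℓ - 1)) * c) * β = c * (2 * (2:ℝ)^ℓ) := by
      rw [show (((1/2 : ℝ) ^ (2*ℓ - 1)) * c) * β = c * (((1/2 : ℝ) ^ (2*ℓ - 1)) * β) by ring,
        htβ]
    rw [e2] at e1
    nlinarith
  have h2ℓ : (0:ℝ) < 2^ℓ := by positivity
  have hcℓ : c < ((2:ℝ)^ℓ)⁻¹ := by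
    rw [show ((2:ℝ)^ℓ)⁻¹ = 1/(2^ℓ) by ring, lt_div_iff₀ h2ℓ]
    linarith
  have hμYc_lt : μ ((Yset N k)ᶜ) < ((2:ℝ≥0∞) ^ ℓ)⁻¹ := by
    have hne := measure_ne_top μ ((Yset N k)ᶜ)
    rw [← ENNReal.ofReal_toReal hne]
    have heq : ((2:ℝ≥0∞)^ℓ)⁻¹ = ENNReal.ofReal (((2:ℝ)^ℓ)⁻¹) := by
      rw [ENNReal.ofReal_inv_of_pos (by positivity),
        ENNReal.ofReal_pow (by norm_num : (0:ℝ) ≤ 2)]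
      norm_num
    rw [heq]
    exact (ENNReal.ofReal_lt_ofReal_iff (by positivity)).mpr hcℓ
  have hadd : μ (Yset N k) + μ ((Yset N k)ᶜ) = 1 := by
    rw [measure_add_measure_compl hYm, measure_univ]
  have hlt1 : (1:ℝ≥0∞) < μ (Yset N k) + ((2:ℝ≥0∞)^ℓ)⁻¹ := by
    rw [← hadd]
    exact ENNReal.add_lt_add_left (measure_ne_top μ _) hμYc_lt
  have hinvle : ((2:ℝ≥0∞)^ℓ)⁻¹ ≤ 1 := by
    rw [ENNReal.inv_le_one]
    exact one_le_pow_of_one_le' (by norm_num : (1:ℝ≥0∞) ≤ 2) ℓ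
  have hinvtop : ((2:ℝ≥0∞)^ℓ)⁻¹ ≠ ∞ := by
    rw [ENNReal.inv_ne_top]
    positivity
  rw [ENNReal.sub_lt_iff_lt_right hinvtop hinvle]
  exact hlt1

end
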